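/- arXiv:1707.07763 — 2 statements merged into one kernel-verified Lean document; each statement's English description precedes it below -/
import Mathlib

section
/- Let Y be a finite nonempty set and let T be a finite set of interpretations I each assigned a real weight w(I), and let φ : T × Y → Prop. Then Σ_{I ∈ T, ∃y φ(I,y)} w(I) = Σ_{I ∈ T, ∀y (φ(I,y) → true)} w(I)·1 + Σ_{I ∈ T, ∀y ¬φ(I,y)} w(I)·(-1) evaluated as: the weighted count of interpretations satisfying ∃y φ(I,y) equals the signed weighted count over extended interpretations (I, a) with a ∈ Bool, weight w(I)·s(a) (s(true)=1, s(false)=-1), satisfying ∀y (φ(I,y) → a = true). -/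
open Finset

theorem stmt_1 {T : Type*} [Fintype T] {Y : Type*} [Fintype Y] [Nonempty Y]
    (w : T → ℝ) (φ : T → Y → Prop) [∀ I y, Decidable (φ I y)]
    (s : Bool → ℝ) (hs1 : s true = 1) (hs2 : s false = -1) :
    ∑ I ∈ Finset.univ.filter (fun I : T => ∃ y : Y, φ I y), w I =
      ∑ p ∈ Finset.univ.filter (fun p : T × Bool => ∀ y : Y, φ p.1 y → p.2 = true),
        w p.1 * s p.2 := by
  rw [Finset.sum_filter, Finset.sum_filter, Fintype.sum_prod_type]
  apply Finset.sum_congr rfl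
  intro I _
  rw [Fintype.sum_bool]
  simp only [hs1, hs2]
  by_cases h : ∃ y : Y, φ I y
  · have h' : ¬ ∀ y : Y, φ I y → False := fun hf => h.elim fun y hy => hf y hy
    simp [h, h']
  · push_neg at h
    simp [h]
end

section
/- Fix finite sets C, P with |C| = |P| = n and weights w : Bool → ℝ with w(true) = w(false) = 1. The weighted model count of the Skolemized deck-of-cards theory — over relations S ⊆ C × P together with A ⊆ C and B ⊆ P, with clauses ∀c,p: ¬S(c,p) ∨ A(c); ∀c,p: ¬S(c,p) ∨ B(p); ∀p, distinct c₁,c₂: ¬S(c₁,p) ∨ ¬S(c₂,p), where each interpretation has weight (−1)^(|C \ A| + |P \ B|) — equals n!, the model count of the original (non-Skolemized) theory. -/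
open Finset

section Aux

variable {α β : Type*} [Fintype α] [Fintype β] [DecidableEq α] [DecidableEq β]

lemma aux_core (occ : α → Prop) [DecidablePred occ] :
    (∑ A : α → Bool, if ∀ a, occ a → A a = true
        then (-1 : ℝ) ^ (Finset.univ.filter (fun a => A a = false)).card else 0)
      = if ∀ a, occ a then 1 else 0 := by
  have h1 : ∀ A : α → Bool,
      (if ∀ a, occ a → A a = true
          then (-1 : ℝ) ^ (Finset.univ.filter (fun a => A a = false)).card else 0)
        = ∏ a, if occ a → A a = true then (if A a then (1 : ℝ) else -1) else 0 := by
    intro A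
    by_cases h : ∀ a, occ a → A a = true
    · rw [if_pos h]
      have hfac : ∀ a : α,
          (if occ a → A a = true then (if A a then (1 : ℝ) else -1) else 0)
            = (if A a = false then (-1 : ℝ) else 1) := by
        intro a
        rw [if_pos (h a)]
        cases hA : A a <;> simp
      calc (-1 : ℝ) ^ (Finset.univ.filter (fun a => A a = false)).card
          = ∏ _a ∈ Finset.univ.filter (fun a => A a = false), (-1 : ℝ) := by
            rw [Finset.prod_const]
        _ = ∏ a, if A a = false then (-1 : ℝ) else 1 := Finset.prod_filter _ _
        _ = ∏ a, if occ a → A a = true then (if A a then (1 : ℝ) else -1) else 0 :=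
            Finset.prod_congr rfl (fun a _ => (hfac a).symm)
    · rw [if_neg h]
      push_neg at h
      obtain ⟨a, ha, ha2⟩ := h
      symm
      apply Finset.prod_eq_zero (Finset.mem_univ a)
      rw [if_neg]
      tauto
  rw [Finset.sum_congr rfl (fun A _ => h1 A), ← Fintype.piFinset_univ,
    ← Finset.prod_univ_sum (fun _ : α => (Finset.univ : Finset Bool))
      (fun a b => if occ a → b = true then (if b = true then (1 : ℝ) else -1) else 0)]
  have h2 : ∀ a : α,
      (∑ b : Bool, if occ a → b = true then (if b then (1 : ℝ) else -1) else 0)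
        = if occ a then 1 else 0 := by
    intro a
    by_cases h : occ a <;> simp [h]
  rw [Finset.prod_congr rfl (fun a _ => h2 a)]
  by_cases h : ∀ a, occ a
  · rw [if_pos h]
    exact Finset.prod_eq_one fun a _ => if_pos (h a)
  · rw [if_neg h]
    push_neg at h
    obtain ⟨a, ha⟩ := h
    exact Finset.prod_eq_zero (Finset.mem_univ a) (if_neg ha)

lemma aux_sum (S : α → β → Bool) :
    (∑ A : α → Bool, if ∀ (a : α) (b : β), ¬ S a b = true ∨ A a = true
        then (-1 : ℝ) ^ (Finset.univ.filter (fun a => A a = false)).card else 0)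
      = if ∀ a, ∃ b, S a b = true then 1 else 0 := by
  have h : ∀ A : α → Bool,
      (∀ (a : α) (b : β), ¬ S a b = true ∨ A a = true)
        ↔ (∀ a, (∃ b, S a b = true) → A a = true) := by
    intro A
    constructor
    · rintro h a ⟨b, hb⟩
      rcases h a b with h' | h'
      · exact absurd hb h'
      · exact h'
    · intro h a b
      by_cases hb : S a b = true
      · exact Or.inr (h a ⟨b, hb⟩)
      · exact Or.inl hb
  simp only [h]
  exact aux_core _

lemma aux_sum' (S : β → α → Bool) :
    (∑ A : α → Bool, if ∀ (b : β) (a : α), ¬ S b a = true ∨ A a = true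
        then (-1 : ℝ) ^ (Finset.univ.filter (fun a => A a = false)).card else 0)
      = if ∀ a, ∃ b, S b a = true then 1 else 0 := by
  have h : ∀ A : α → Bool,
      (∀ (b : β) (a : α), ¬ S b a = true ∨ A a = true)
        ↔ (∀ (a : α) (b : β), ¬ (fun a b => S b a) a b = true ∨ A a = true) := by
    intro A
    exact forall_swap
  simp only [h]
  exact aux_sum _

lemma sum_sum_mul {ι κ : Type*} [Fintype ι] [Fintype κ] (c : ℝ) (f : ι → ℝ) (g : κ → ℝ) :
    (∑ i : ι, ∑ j : κ, c * (f i * g j)) = c * ((∑ i : ι, f i) * (∑ j : κ, g j)) := by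
  rw [Finset.sum_mul_sum, Finset.mul_sum]
  exact Finset.sum_congr rfl fun i _ => by rw [Finset.mul_sum]

lemma ite_mul_split (a b c : Prop) [Decidable a] [Decidable b] [Decidable c] (x y : ℝ) :
    (if a ∧ b ∧ c then x * y else 0)
      = (if c then (1 : ℝ) else 0) * ((if a then x else 0) * (if b then y else 0)) := by
  by_cases ha : a <;> by_cases hb : b <;> by_cases hc : c <;> simp [ha, hb, hc]

lemma count_eq {C P : Type*} [Fintype C] [Fintype P] [DecidableEq C] [DecidableEq P]
    (n : ℕ) (hC : Fintype.card C = n) (hP : Fintype.card P = n) :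
    (Finset.univ.filter
        (fun S : C → P → Bool =>
          (∀ (p : P) (c₁ c₂ : C), c₁ ≠ c₂ → (¬ S c₁ p = true ∨ ¬ S c₂ p = true)) ∧
          (∀ c, ∃ p, S c p = true) ∧ (∀ p, ∃ c, S c p = true))).card
      = Nat.factorial n := by
  classical
  have hcard : Fintype.card P = Fintype.card C := hP.trans hC.symm
  have hbij : (Finset.univ.filter (fun g : P → C => Function.Injective g)).card
      = (Finset.univ.filter
        (fun S : C → P → Bool =>
          (∀ (p : P) (c₁ c₂ : C), c₁ ≠ c₂ → (¬ S c₁ p = true ∨ ¬ S c₂ p = true)) ∧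
          (∀ c, ∃ p, S c p = true) ∧ (∀ p, ∃ c, S c p = true))).card := by
    apply Finset.card_bij (fun g _ => fun c p => decide (g p = c))
    · intro g hg
      simp only [Finset.mem_filter, Finset.mem_univ, true_and] at hg ⊢
      have hbij : Function.Bijective g :=
        (Fintype.bijective_iff_injective_and_card g).mpr ⟨hg, hcard⟩
      refine ⟨?_, ?_, ?_⟩
      · intro p c₁ c₂ hne
        by_contra hcon
        push_neg at hcon
        obtain ⟨h1, h2⟩ := hcon
        simp only [not_not, decide_eq_true_eq] at h1 h2
        exact hne (h1.symm.trans h2)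
      · intro c
        obtain ⟨p, hp⟩ := hbij.2 c
        exact ⟨p, by simp [hp]⟩
      · intro p
        exact ⟨g p, by simp⟩
    · intro g₁ h₁ g₂ h₂ heq
      funext p
      have h := congrFun (congrFun heq (g₁ p)) p
      have h' : decide (g₂ p = g₁ p) = true := by rw [← h]; simp
      exact (of_decide_eq_true h').symm
    · intro S hS
      simp only [Finset.mem_filter, Finset.mem_univ, true_and] at hS
      obtain ⟨h1, h2, h3⟩ := hS
      have hg : ∀ p, S (Classical.choose (h3 p)) p = true := fun p => Classical.choose_spec (h3 p)
      set g : P → C := fun p => Classical.choose (h3 p) with hgdef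
      have huniq : ∀ (p : P) (c : C), S c p = true → c = g p := by
        intro p c hc
        by_contra hne
        rcases h1 p c (g p) hne with h' | h'
        · exact h' hc
        · exact h' (hg p)
      have hsurj : Function.Surjective g := by
        intro c
        obtain ⟨p, hp⟩ := h2 c
        exact ⟨p, (huniq p c hp).symm⟩
      have hbijg : Function.Bijective g :=
        (Fintype.bijective_iff_surjective_and_card g).mpr ⟨hsurj, hcard⟩
      refine ⟨g, by simp [Finset.mem_filter, hbijg.1], ?_⟩
      funext c p
      cases hcp : S c p
      · have : g p ≠ c := by
          intro h
          rw [← h] at hcp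
          exact absurd (hg p) (by simp only [Bool.not_eq_true]; exact hcp)
        simp [this]
      · have : g p = c := (huniq p c hcp).symm
        simp [this]
  rw [← hbij, ← Fintype.card_subtype]
  rw [Fintype.card_congr (Equiv.subtypeInjectiveEquivEmbedding P C),
    Fintype.card_embedding_eq, hC, hP, Nat.descFactorial_self]

end Aux

theorem stmt_15 {C P : Type*} [Fintype C] [Fintype P] [DecidableEq C] [DecidableEq P]
    (n : ℕ) (hC : Fintype.card C = n) (hP : Fintype.card P = n)
    (w : Bool → ℝ) (hwt : w true = 1) (hwf : w false = 1) :
    (∑ I ∈ Finset.univ.filter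
        (fun I : (C → P → Bool) × (C → Bool) × (P → Bool) =>
          (∀ (c : C) (p : P), ¬ I.1 c p = true ∨ I.2.1 c = true) ∧
          (∀ (c : C) (p : P), ¬ I.1 c p = true ∨ I.2.2 p = true) ∧
          (∀ (p : P) (c₁ c₂ : C), c₁ ≠ c₂ → (¬ I.1 c₁ p = true ∨ ¬ I.1 c₂ p = true))),
        (∏ c : C, ∏ p : P, w (I.1 c p)) *
        (-1 : ℝ) ^ ((Finset.univ.filter (fun c : C => I.2.1 c = false)).card +
                    (Finset.univ.filter (fun p : P => I.2.2 p = false)).card)) =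
      (Nat.factorial n : ℝ) := by
  classical
  have hw : ∀ b, w b = 1 := by intro b; cases b <;> assumption
  rw [Finset.sum_filter]
  simp only [hw, Finset.prod_const_one, one_mul, pow_add]
  rw [Fintype.sum_prod_type]
  simp only [Fintype.sum_prod_type]
  simp only [ite_mul_split]
  refine Eq.trans (Finset.sum_congr rfl fun S _ => sum_sum_mul
    (if ∀ (p : P) (c₁ c₂ : C), c₁ ≠ c₂ → (¬ S c₁ p = true ∨ ¬ S c₂ p = true) then (1 : ℝ) else 0)
    (fun A : C → Bool => if ∀ (c : C) (p : P), ¬ S c p = true ∨ A c = true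
      then (-1 : ℝ) ^ (Finset.univ.filter (fun c => A c = false)).card else 0)
    (fun B : P → Bool => if ∀ (c : C) (p : P), ¬ S c p = true ∨ B p = true
      then (-1 : ℝ) ^ (Finset.univ.filter (fun p => B p = false)).card else 0)) ?_
  simp only [aux_sum, aux_sum']
  have hterm : ∀ S : C → P → Bool,
      (if (∀ (p : P) (c₁ c₂ : C), c₁ ≠ c₂ → (¬ S c₁ p = true ∨ ¬ S c₂ p = true))
          then (1 : ℝ) else 0) *
        ((if ∀ c, ∃ p, S c p = true then (1 : ℝ) else 0) *
          (if ∀ p, ∃ c, S c p = true then (1 : ℝ) else 0))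
        = if ((∀ (p : P) (c₁ c₂ : C), c₁ ≠ c₂ → (¬ S c₁ p = true ∨ ¬ S c₂ p = true)) ∧
            (∀ c, ∃ p, S c p = true) ∧ (∀ p, ∃ c, S c p = true)) then (1 : ℝ) else 0 := by
    intro S
    by_cases h1 : (∀ (p : P) (c₁ c₂ : C), c₁ ≠ c₂ → (¬ S c₁ p = true ∨ ¬ S c₂ p = true)) <;>
      by_cases h2 : (∀ c, ∃ p, S c p = true) <;>
      by_cases h3 : (∀ p, ∃ c, S c p = true) <;>
      simp [h1, h2, h3]
  rw [Finset.sum_congr rfl (fun S _ => hterm S), Finset.sum_boole, count_eq n hC hP]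
end
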